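/- For each n ≥ 1 and all real x, q_{2n-1}(x) = (-1)^n · (1+x²)^{n-1/2} · x · U_{2n-1}(1/√(1+x²)), where U_m denotes the m-th Chebyshev polynomial of the second kind. -/

import Mathlib

open Finset Polynomial Real

noncomputable def q (n : ℕ) (x : ℝ) : ℝ :=
  (-1 : ℝ)^n * ∑ k ∈ (Finset.range (n+1)).filter (fun k => Even k),
    ((n+1).choose (k+1) : ℝ) * (-1 : ℝ)^(k/2) * x^(n-k)

lemma negpow_congr (a b : ℕ) (h : a % 2 = b % 2) : (-1:ℝ)^a = (-1:ℝ)^b := by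
  rcases Nat.even_or_odd a with ha | ha
  · have ha' := Nat.even_iff.mp ha
    have hb : Even b := Nat.even_iff.mpr (by omega)
    rw [ha.neg_one_pow, hb.neg_one_pow]
  · have ha' := Nat.odd_iff.mp ha
    have hb : Odd b := Nat.odd_iff.mpr (by omega)
    rw [ha.neg_one_pow, hb.neg_one_pow]

lemma q_eq_sum (n : ℕ) (hn : 1 ≤ n) (x : ℝ) :
    q (2*n-1) x = (-1:ℝ)^n * ∑ l ∈ Finset.range n,
      ((2*n).choose (2*l+1) : ℝ) * (-1:ℝ)^l * x^(2*l+1) := by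
  have h2n : 2*n-1+1 = 2*n := by omega
  unfold q
  rw [h2n]
  have hfil : (∑ m ∈ Finset.range n,
        ((2*n).choose (2*m+1) : ℝ) * (-1:ℝ)^m * x^(2*n-1-2*m))
      = ∑ k ∈ (Finset.range (2*n)).filter (fun k => Even k),
        ((2*n).choose (k+1) : ℝ) * (-1:ℝ)^(k/2) * x^(2*n-1-k) := by
    refine Finset.sum_nbij' (fun m => 2*m) (fun k => k/2) ?_ ?_ ?_ ?_ ?_
    · intro a ha
      simp only [Finset.mem_filter, Finset.mem_range] at ha ⊢
      exact ⟨by omega, even_two_mul a⟩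
    · intro a ha
      simp only [Finset.mem_filter, Finset.mem_range] at ha ⊢
      omega
    · intro a ha
      show (2*a)/2 = a
      omega
    · intro a ha
      simp only [Finset.mem_filter, Finset.mem_range] at ha
      obtain ⟨-, m, hm⟩ := ha
      show 2*(a/2) = a
      omega
    · intro a ha
      show _ = ((2*n).choose (2*a+1) : ℝ) * (-1:ℝ)^((2*a)/2) * x^(2*n-1-2*a)
      have : (2*a)/2 = a := by omega
      rw [this]
  rw [← hfil]
  rw [Finset.mul_sum, Finset.mul_sum, ← Finset.sum_range_reflect]
  refine Finset.sum_congr rfl ?_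
  intro m hm
  simp only [Finset.mem_range] at hm
  have h1 : 2*n - 1 - 2*(n-1-m) = 2*m+1 := by omega
  have h2 : (2*n).choose (2*(n-1-m)+1) = (2*n).choose (2*m+1) := by
    rw [show 2*(n-1-m)+1 = 2*n - (2*m+1) by omega, Nat.choose_symm (by omega)]
  rw [h1, h2]
  have hs : (-1:ℝ)^(2*n-1) * (-1:ℝ)^(n-1-m) = (-1:ℝ)^n * (-1:ℝ)^m := by
    rw [← pow_add, ← pow_add]
    exact negpow_congr _ _ (by omega)
  linear_combination (((2*n).choose (2*m+1) : ℝ) * x^(2*m+1)) * hs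

lemma im_pow_eq (n : ℕ) (x : ℝ) :
    (((1:ℂ) + (x:ℂ) * Complex.I)^(2*n)).im
      = ∑ l ∈ Finset.range n, ((2*n).choose (2*l+1) : ℝ) * (-1:ℝ)^l * x^(2*l+1) := by
  rw [add_comm, add_pow, Complex.im_sum]
  have key : ∀ k ∈ Finset.range (2*n+1),
      (((x:ℂ)*Complex.I)^k * (1:ℂ)^(2*n-k) * ((2*n).choose k : ℕ)).im
      = if Odd k then ((2*n).choose k : ℝ) * (-1:ℝ)^(k/2) * x^k else 0 := by
    intro k _
    rcases Nat.even_or_odd k with ⟨l, hl⟩ | hodd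
    · rw [if_neg (by simp [Nat.not_odd_iff_even.mpr ⟨l, hl⟩])]
      subst hl
      rw [mul_pow, one_pow, mul_one]
      have hI : Complex.I ^ (l+l) = (((-1:ℝ)^l : ℝ) : ℂ) := by
        rw [← two_mul, pow_mul, Complex.I_sq]
        push_cast; ring
      rw [hI, show ((x:ℂ))^(l+l) * (((-1:ℝ)^l : ℝ) : ℂ) * ((2*n).choose (l+l) : ℕ)
          = (((x^(l+l) * (-1:ℝ)^l * ((2*n).choose (l+l) : ℕ) : ℝ)) : ℂ) by push_cast; ring]
      exact Complex.ofReal_im _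
    · rw [if_pos hodd]
      obtain ⟨l, hl⟩ := hodd
      subst hl
      rw [mul_pow, one_pow, mul_one]
      have hI : Complex.I ^ (2*l+1) = (((-1:ℝ)^l : ℝ) : ℂ) * Complex.I := by
        rw [pow_succ, pow_mul, Complex.I_sq]
        push_cast; ring
      rw [hI, show ((x:ℂ))^(2*l+1) * ((((-1:ℝ)^l : ℝ) : ℂ) * Complex.I) * ((2*n).choose (2*l+1) : ℕ)
          = (((((2*n).choose (2*l+1) : ℕ) * (-1:ℝ)^l * x^(2*l+1) : ℝ)) : ℂ) * Complex.I by
        push_cast; ring]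
      rw [Complex.mul_I_im, Complex.ofReal_re]
      have : (2*l+1)/2 = l := by omega
      rw [this]
  rw [Finset.sum_congr rfl key, ← Finset.sum_filter]
  symm
  refine Finset.sum_nbij' (fun l => 2*l+1) (fun k => k/2) ?_ ?_ ?_ ?_ ?_
  · intro a ha
    simp only [Finset.mem_filter, Finset.mem_range] at ha ⊢
    exact ⟨by omega, odd_two_mul_add_one a⟩
  · intro a ha
    simp only [Finset.mem_filter, Finset.mem_range] at ha ⊢
    have := Nat.odd_iff.mp ha.2
    omega
  · intro a ha
    show (2*a+1)/2 = a
    omega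
  · intro a ha
    simp only [Finset.mem_filter, Finset.mem_range] at ha
    have := Nat.odd_iff.mp ha.2
    show 2*(a/2)+1 = a
    omega
  · intro a ha
    show _ = ((2*n).choose (2*a+1) : ℝ) * (-1:ℝ)^((2*a+1)/2) * x^(2*a+1)
    have : (2*a+1)/2 = a := by omega
    rw [this]

theorem q_odd_chebyshevU (n : ℕ) (hn : 1 ≤ n) (x : ℝ) :
    q (2 * n - 1) x = (-1 : ℝ)^n * ((1 + x^2)^(n-1) * Real.sqrt (1 + x^2)) * x *
      (Polynomial.Chebyshev.U ℝ (2 * n - 1)).eval (1 / Real.sqrt (1 + x^2)) := by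
  set s := Real.sqrt (1 + x^2) with hs_def
  have hpos : (0:ℝ) < 1 + x^2 := by positivity
  have hs : 0 < s := Real.sqrt_pos.mpr hpos
  have hs2 : s^2 = 1 + x^2 := Real.sq_sqrt hpos.le
  have hxs : |x| ≤ s := by
    rw [hs_def, ← Real.sqrt_sq_eq_abs]
    exact Real.sqrt_le_sqrt (by nlinarith)
  set θ := Real.arcsin (x / s) with hθ_def
  have habs : |x / s| ≤ 1 := by
    rw [abs_div, abs_of_pos hs, div_le_one hs]
    exact hxs
  have hsin : Real.sin θ = x / s :=
    Real.sin_arcsin (abs_le.mp habs).1 (abs_le.mp habs).2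
  have hcos : Real.cos θ = 1 / s := by
    rw [hθ_def, Real.cos_arcsin]
    rw [show 1 - (x/s)^2 = (1/s)^2 by field_simp; nlinarith]
    exact Real.sqrt_sq (by positivity)
  -- complex exponential form
  have h1 : (1:ℂ) + (x:ℂ) * Complex.I = (s:ℂ) * Complex.exp ((θ:ℂ) * Complex.I) := by
    have hne : (s:ℂ) ≠ 0 := Complex.ofReal_ne_zero.mpr hs.ne'
    rw [Complex.exp_mul_I, ← Complex.ofReal_cos, ← Complex.ofReal_sin, hcos, hsin]
    push_cast
    field_simp
  have him : (((1:ℂ) + (x:ℂ) * Complex.I)^(2*n)).im = (1+x^2)^n * Real.sin (2*n*θ) := by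
    have h2 : ((1:ℂ) + (x:ℂ)*Complex.I)^(2*n)
        = Complex.ofReal ((1+x^2)^n) * Complex.exp (Complex.ofReal (2*n*θ) * Complex.I) := by
      rw [h1, mul_pow, ← Complex.exp_nat_mul]
      congr 1
      · rw [← Complex.ofReal_pow]
        congr 1
        rw [pow_mul, hs2]
      · congr 1
        push_cast
        ring
    rw [h2, Complex.mul_im, Complex.ofReal_re, Complex.ofReal_im, zero_mul, add_zero,
        Complex.exp_ofReal_mul_I_im]
  have hU : (Polynomial.Chebyshev.U ℝ (2 * n - 1)).eval (1 / s) * (x / s)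
      = Real.sin (2*n*θ) := by
    rw [← hcos, ← hsin]
    have := Polynomial.Chebyshev.U_real_cos θ (2 * n - 1)
    rw [this]
    congr 1
    push_cast
    ring
  rw [q_eq_sum n hn x, ← im_pow_eq n x, him]
  have hx : x = s * (x / s) := by field_simp
  calc (-1:ℝ)^n * ((1+x^2)^n * Real.sin (2*n*θ))
      = (-1:ℝ)^n * ((1+x^2)^n * ((Polynomial.Chebyshev.U ℝ (2 * n - 1)).eval (1/s) * (x/s))) := by
        rw [hU]
    _ = (-1 : ℝ)^n * ((1 + x^2)^(n-1) * s) * x *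
        (Polynomial.Chebyshev.U ℝ (2 * n - 1)).eval (1 / s) := by
        rw [show (1+x^2)^n = (1+x^2)^(n-1) * s^2 by rw [hs2, ← pow_succ]; congr 1; omega]
        field_simp
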